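/- Fix g > 1 and ω > 1. With ν₁(μ), ν₂(μ) the symplectic eigenvalues defined by ν±(μ) = √((Δ(μ) ± √(Δ(μ)² − 4D(μ)))/2) for Δ(μ) = ((g−1)μ+gω)² + ω² − 2g(ω²−1) and D(μ) = (((g−1)μ+gω)·ω − g(ω²−1))², the total entropy S_T(μ) := h(ν₁(μ)) + h(ν₂(μ)) satisfies: S_T(μ) − [ log₂( e·(g−1)·μ/2 ) + h(ω) ] tends to 0 as μ → ∞. -/

import Mathlib

open Real Filter Topology

/-- The bosonic entropy function. -/
noncomputable def h (x : ℝ) : ℝ :=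
  ((x + 1) / 2) * Real.logb 2 ((x + 1) / 2) - ((x - 1) / 2) * Real.logb 2 ((x - 1) / 2)

/-- `Δ(μ) = ((g−1)μ+gω)² + ω² − 2g(ω²−1)`. -/
noncomputable def Delta (g ω μ : ℝ) : ℝ :=
  ((g - 1) * μ + g * ω) ^ 2 + ω ^ 2 - 2 * (g * (ω ^ 2 - 1))

/-- `D(μ) = (((g−1)μ+gω)·ω − g(ω²−1))²`. -/
noncomputable def Dprod (g ω μ : ℝ) : ℝ :=
  (((g - 1) * μ + g * ω) * ω - g * (ω ^ 2 - 1)) ^ 2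

/-- The larger symplectic eigenvalue `ν₁(μ)`. -/
noncomputable def nu1 (g ω μ : ℝ) : ℝ :=
  Real.sqrt ((Delta g ω μ + Real.sqrt ((Delta g ω μ) ^ 2 - 4 * Dprod g ω μ)) / 2)

/-- The smaller symplectic eigenvalue `ν₂(μ)`. -/
noncomputable def nu2 (g ω μ : ℝ) : ℝ :=
  Real.sqrt ((Delta g ω μ - Real.sqrt ((Delta g ω μ) ^ 2 - 4 * Dprod g ω μ)) / 2)

lemma tendsto_log_one_add_div (t : ℝ) :
    Tendsto (fun x : ℝ => Real.log (1 + t / x)) atTop (𝓝 0) := by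
  have h1 : Tendsto (fun x : ℝ => 1 + t / x) atTop (𝓝 1) := by
    have := tendsto_inv_atTop_zero (𝕜 := ℝ)
    simpa [div_eq_mul_inv] using tendsto_const_nhds.add (this.const_mul t)
  have := (Real.continuousAt_log one_ne_zero).tendsto.comp h1
  simpa [Function.comp_def] using this

lemma hdiff_tendsto : Tendsto (fun x : ℝ => h x - Real.logb 2 (Real.exp 1 * x / 2)) atTop (𝓝 0) := by
  have hP := tendsto_log_one_add_div 1
  have hQ := tendsto_log_one_add_div (-1)
  have hxP := Real.tendsto_mul_log_one_add_div_atTop 1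
  have hxQ := Real.tendsto_mul_log_one_add_div_atTop (-1)
  have hlog2 : Real.log 2 ≠ 0 := ne_of_gt (Real.log_pos one_lt_two)
  have hnum : Tendsto (fun x : ℝ =>
      ((1/2) * (x * Real.log (1 + 1/x)) + (1/2) * Real.log (1 + 1/x)
        - ((1/2) * (x * Real.log (1 + (-1)/x)) - (1/2) * Real.log (1 + (-1)/x)) - 1))
      atTop (𝓝 ((1/2) * 1 + (1/2) * 0 - ((1/2) * (-1) - (1/2) * 0) - 1)) := by
    exact ((((hxP.const_mul _).add (hP.const_mul _)).sub
      ((hxQ.const_mul _).sub (hQ.const_mul _))).sub tendsto_const_nhds)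
  have hG : Tendsto (fun x : ℝ =>
      ((1/2) * (x * Real.log (1 + 1/x)) + (1/2) * Real.log (1 + 1/x)
        - ((1/2) * (x * Real.log (1 + (-1)/x)) - (1/2) * Real.log (1 + (-1)/x)) - 1) / Real.log 2)
      atTop (𝓝 0) := by
    have := hnum.div_const (Real.log 2)
    norm_num at this
    simpa using this
  refine hG.congr' ?_
  filter_upwards [eventually_gt_atTop 1] with x hx
  have hx0 : (0:ℝ) < x := by linarith
  have h1 : (0:ℝ) < 1 + 1/x := by positivity
  have h2 : (0:ℝ) < 1 + (-1)/x := by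
    have : (1:ℝ)/x < 1 := by rw [div_lt_one hx0]; linarith
    have : (-1:ℝ)/x = -(1/x) := by ring
    rw [this]; linarith
  have e1 : (x+1)/2 = (x/2) * (1 + 1/x) := by field_simp
  have e2 : (x-1)/2 = (x/2) * (1 + (-1)/x) := by field_simp; ring
  have e3 : Real.exp 1 * x / 2 = (x/2) * Real.exp 1 := by ring
  have hx2 : (0:ℝ) < x/2 := by positivity
  unfold h
  rw [Real.logb, Real.logb, Real.logb, e1, e2, e3, Real.log_mul hx2.ne' h1.ne',
    Real.log_mul hx2.ne' h2.ne', Real.log_mul hx2.ne' (Real.exp_ne_zero 1), Real.log_exp]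
  field_simp
  ring

lemma tendsto_quad (p q r : ℝ) :
    Tendsto (fun μ : ℝ => (p * μ ^ 2 + q * μ + r) / μ ^ 2) atTop (𝓝 p) := by
  have h1 : Tendsto (fun μ : ℝ => p + q * μ⁻¹ + r * μ⁻¹ ^ 2) atTop
      (𝓝 (p + q * 0 + r * 0 ^ 2)) :=
    (tendsto_const_nhds.add (tendsto_inv_atTop_zero.const_mul q)).add
      ((tendsto_inv_atTop_zero.pow 2).const_mul r)
  norm_num at h1
  refine h1.congr' ?_
  filter_upwards [eventually_gt_atTop 0] with μ hμ
  field_simp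

section
variable (g ω : ℝ) (hg : 1 < g) (hω : 1 < ω)

set_option linter.unusedSectionVars false

lemma tendsto_Delta : Tendsto (fun μ : ℝ => Delta g ω μ / μ ^ 2) atTop (𝓝 ((g - 1) ^ 2)) := by
  have := tendsto_quad ((g-1)^2) (2*(g-1)*(g*ω)) ((g*ω)^2 + ω^2 - 2*(g*(ω^2-1)))
  refine this.congr fun μ => ?_
  rw [Delta]; ring

lemma tendsto_Dprod : Tendsto (fun μ : ℝ => Dprod g ω μ / μ ^ 2) atTop (𝓝 ((g - 1) ^ 2 * ω ^ 2)) := by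
  have := tendsto_quad ((g-1)^2*ω^2) (2*(g-1)*ω*g) (g^2)
  refine this.congr fun μ => ?_
  rw [Dprod]; ring

include hg hω

lemma tendsto_E : Tendsto (fun μ : ℝ => ((Delta g ω μ) ^ 2 - 4 * Dprod g ω μ) / μ ^ 4) atTop
    (𝓝 ((g - 1) ^ 4)) := by
  have h1 : Tendsto (fun μ : ℝ => (Delta g ω μ / μ ^ 2) ^ 2
      - 4 * ((Dprod g ω μ / μ ^ 2) * (μ⁻¹ ^ 2))) atTop
      (𝓝 (((g-1)^2)^2 - 4 * ((g-1)^2 * ω^2 * 0^2))) :=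
    ((tendsto_Delta g ω).pow 2).sub
      (((tendsto_Dprod g ω).mul (tendsto_inv_atTop_zero.pow 2)).const_mul 4)
  norm_num at h1
  rw [show ((g-1):ℝ)^4 = ((g-1)^2)^2 by ring]
  refine h1.congr' ?_
  filter_upwards [eventually_gt_atTop 0] with μ hμ
  field_simp

lemma tendsto_sqrtE : Tendsto (fun μ : ℝ =>
    Real.sqrt (((Delta g ω μ) ^ 2 - 4 * Dprod g ω μ) / μ ^ 4)) atTop (𝓝 ((g - 1) ^ 2)) := by
  have := (Real.continuous_sqrt.tendsto ((g-1)^4)).comp (tendsto_E g ω hg hω)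
  rw [show ((g-1):ℝ)^4 = ((g-1)^2)^2 by ring] at this
  rw [Real.sqrt_sq (by positivity)] at this
  exact this

lemma ev_Delta_pos : ∀ᶠ μ : ℝ in atTop, 0 < Delta g ω μ := by
  have h1 := (tendsto_Delta g ω).eventually (eventually_gt_nhds (pow_pos (show (0:ℝ) < g-1 by linarith) 2))
  filter_upwards [h1, eventually_gt_atTop 0] with μ h1 h2
  have := mul_pos h1 (pow_pos h2 2)
  rwa [div_mul_cancel₀ _ (by positivity)] at this

lemma ev_E_nonneg : ∀ᶠ μ : ℝ in atTop, 0 ≤ (Delta g ω μ) ^ 2 - 4 * Dprod g ω μ := by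
  have h1 := (tendsto_E g ω hg hω).eventually (eventually_gt_nhds (pow_pos (show (0:ℝ) < g-1 by linarith) 4))
  filter_upwards [h1, eventually_gt_atTop 0] with μ h1 h2
  have := mul_pos h1 (pow_pos h2 4)
  rw [div_mul_cancel₀ _ (by positivity)] at this
  linarith

lemma tendsto_nu1_div : Tendsto (fun μ : ℝ => nu1 g ω μ / μ) atTop (𝓝 (g - 1)) := by
  have hX : Tendsto (fun μ : ℝ => (Delta g ω μ / μ ^ 2
      + Real.sqrt (((Delta g ω μ) ^ 2 - 4 * Dprod g ω μ) / μ ^ 4)) / 2) atTop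
      (𝓝 (((g-1)^2 + (g-1)^2) / 2)) :=
    ((tendsto_Delta g ω).add (tendsto_sqrtE g ω hg hω)).div_const 2
  have hX2 := (Real.continuous_sqrt.tendsto _).comp hX
  rw [show (((g-1):ℝ)^2 + (g-1)^2)/2 = (g-1)^2 by ring, Real.sqrt_sq (by linarith)] at hX2
  refine hX2.congr' ?_
  filter_upwards [eventually_gt_atTop 0, ev_E_nonneg g ω hg hω, ev_Delta_pos g ω hg hω]
    with μ hμ hE hD
  have hs := Real.sqrt_nonneg ((Delta g ω μ) ^ 2 - 4 * Dprod g ω μ)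
  simp only [Function.comp]
  rw [nu1, show μ^4 = (μ^2)^2 by ring, Real.sqrt_div hE, Real.sqrt_sq (sq_nonneg μ),
    show (Delta g ω μ / μ ^ 2 + Real.sqrt ((Delta g ω μ) ^ 2 - 4 * Dprod g ω μ) / μ ^ 2) / 2
      = ((Delta g ω μ + Real.sqrt ((Delta g ω μ) ^ 2 - 4 * Dprod g ω μ)) / 2) / μ ^ 2 by ring,
    Real.sqrt_div (by linarith) (μ^2), Real.sqrt_sq hμ.le]

lemma tendsto_nu2 : Tendsto (fun μ : ℝ => nu2 g ω μ) atTop (𝓝 ω) := by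
  have hden : ((g:ℝ)-1)^2 + (g-1)^2 ≠ 0 := by
    have := pow_pos (show (0:ℝ) < g-1 by linarith) 2
    linarith
  have hX : Tendsto (fun μ : ℝ => (2 * (Dprod g ω μ / μ ^ 2)) / (Delta g ω μ / μ ^ 2
      + Real.sqrt (((Delta g ω μ) ^ 2 - 4 * Dprod g ω μ) / μ ^ 4))) atTop
      (𝓝 ((2 * ((g-1)^2 * ω^2)) / ((g-1)^2 + (g-1)^2))) :=
    ((tendsto_Dprod g ω).const_mul 2).div
      ((tendsto_Delta g ω).add (tendsto_sqrtE g ω hg hω)) hden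
  rw [show (2 * (((g:ℝ)-1)^2 * ω^2)) / ((g-1)^2 + (g-1)^2) = ω^2 by have hg1 : (g:ℝ)-1 ≠ 0 := sub_ne_zero.mpr hg.ne'; field_simp; ring] at hX
  have hX2 := (Real.continuous_sqrt.tendsto _).comp hX
  rw [Real.sqrt_sq (by linarith)] at hX2
  refine hX2.congr' ?_
  filter_upwards [eventually_gt_atTop 0, ev_E_nonneg g ω hg hω, ev_Delta_pos g ω hg hω]
    with μ hμ hE hD
  have hs := Real.sqrt_nonneg ((Delta g ω μ) ^ 2 - 4 * Dprod g ω μ)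
  have hpos : 0 < Delta g ω μ + Real.sqrt ((Delta g ω μ) ^ 2 - 4 * Dprod g ω μ) := by linarith
  simp only [Function.comp]
  rw [nu2, show μ^4 = (μ^2)^2 by ring, Real.sqrt_div hE, Real.sqrt_sq (sq_nonneg μ)]
  congr 1
  have hsq := Real.sq_sqrt hE
  have hμ2 : (μ:ℝ)^2 ≠ 0 := by positivity
  rw [show 2 * (Dprod g ω μ / μ ^ 2) = (2 * Dprod g ω μ) / μ ^ 2 by ring,
    show Delta g ω μ / μ ^ 2 + Real.sqrt ((Delta g ω μ) ^ 2 - 4 * Dprod g ω μ) / μ ^ 2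
      = (Delta g ω μ + Real.sqrt ((Delta g ω μ) ^ 2 - 4 * Dprod g ω μ)) / μ ^ 2 by ring,
    div_div_div_cancel_right₀]
  · rw [div_eq_div_iff hpos.ne' (two_ne_zero)]
    nlinarith [hsq]
  · exact hμ2

lemma tendsto_nu1_atTop : Tendsto (fun μ : ℝ => nu1 g ω μ) atTop atTop := by
  have := (tendsto_nu1_div g ω hg hω).pos_mul_atTop (by linarith : (0:ℝ) < g - 1) tendsto_id
  refine this.congr' ?_
  filter_upwards [eventually_gt_atTop 0] with μ hμ
  simp [div_mul_cancel₀ _ hμ.ne']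

lemma ev_nu1_pos : ∀ᶠ μ : ℝ in atTop, 0 < nu1 g ω μ :=
  (tendsto_nu1_atTop g ω hg hω).eventually_gt_atTop 0

lemma continuousAt_h : ContinuousAt h ω := by
  have h1 : ((ω:ℝ) + 1) / 2 ≠ 0 := by positivity
  have h2 : ((ω:ℝ) - 1) / 2 ≠ 0 := by
    have : (0:ℝ) < (ω - 1) / 2 := by linarith
    exact this.ne'
  have c1 : ContinuousAt (fun x : ℝ => (x + 1) / 2) ω := by fun_prop
  have c2 : ContinuousAt (fun x : ℝ => (x - 1) / 2) ω := by fun_prop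
  have l1 : ContinuousAt (Real.logb 2) ((ω + 1) / 2) := Real.continuousAt_logb h1
  have l2 : ContinuousAt (Real.logb 2) ((ω - 1) / 2) := Real.continuousAt_logb h2
  have m1 : ContinuousAt (fun x : ℝ => Real.logb 2 ((x + 1) / 2)) ω :=
    ContinuousAt.comp (f := fun x : ℝ => (x + 1) / 2) (x := ω) l1 c1
  have m2 : ContinuousAt (fun x : ℝ => Real.logb 2 ((x - 1) / 2)) ω :=
    ContinuousAt.comp (f := fun x : ℝ => (x - 1) / 2) (x := ω) l2 c2
  exact (c1.mul m1).sub (c2.mul m2)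

lemma tendsto_logb_diff : Tendsto (fun μ : ℝ =>
    Real.logb 2 (Real.exp 1 * nu1 g ω μ / 2) - Real.logb 2 (Real.exp 1 * (g - 1) * μ / 2))
    atTop (𝓝 0) := by
  have hg1 : (0:ℝ) < g - 1 := by linarith
  have hinner : Tendsto (fun μ : ℝ => nu1 g ω μ / μ / (g - 1)) atTop (𝓝 1) := by
    have := (tendsto_nu1_div g ω hg hω).div_const (g - 1)
    rwa [div_self hg1.ne'] at this
  have hlogb : Tendsto (fun μ : ℝ => Real.logb 2 (nu1 g ω μ / μ / (g - 1))) atTop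
      (𝓝 (Real.logb 2 1)) :=
    (Real.continuousAt_logb one_ne_zero).tendsto.comp hinner
  rw [Real.logb_one] at hlogb
  refine hlogb.congr' ?_
  filter_upwards [eventually_gt_atTop 0, ev_nu1_pos g ω hg hω] with μ hμ hν
  have he : Real.exp 1 ≠ 0 := Real.exp_ne_zero 1
  have e1 : nu1 g ω μ / μ / (g - 1)
      = (Real.exp 1 * nu1 g ω μ / 2) / (Real.exp 1 * (g - 1) * μ / 2) := by
    field_simp
  rw [e1, Real.logb_div (by positivity) (by positivity)]

end

theorem total_entropy_asymptotic (g ω : ℝ) (hg : 1 < g) (hω : 1 < ω) :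
    Filter.Tendsto
      (fun μ : ℝ =>
        (h (nu1 g ω μ) + h (nu2 g ω μ))
          - (Real.logb 2 (Real.exp 1 * (g - 1) * μ / 2) + h ω))
      Filter.atTop (nhds 0) := by
  have T1 : Tendsto (fun μ : ℝ => h (nu1 g ω μ) - Real.logb 2 (Real.exp 1 * nu1 g ω μ / 2))
      atTop (𝓝 0) := hdiff_tendsto.comp (tendsto_nu1_atTop g ω hg hω)
  have T2 := tendsto_logb_diff g ω hg hω
  have T3 : Tendsto (fun μ : ℝ => h (nu2 g ω μ) - h ω) atTop (𝓝 (h ω - h ω)) :=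
    ((continuousAt_h g ω hg hω).tendsto.comp (tendsto_nu2 g ω hg hω)).sub tendsto_const_nhds
  rw [sub_self] at T3
  have := (T1.add T2).add T3
  rw [add_zero, add_zero] at this
  refine this.congr fun μ => ?_
  ring
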